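/- arXiv:2203.13996 — 2 statements merged into one kernel-verified Lean document; each statement's English description precedes it below -/
import Mathlib

section
/- Let s ≥ 2 be an integer and let a be a complex number with 0 < |a| < 1. Then the Hurwitz zeta value admits the expansion ζ(s;a) = 1/a^s + ∑_{i=1}^∞ (−1)^{i−1} C(i+s−2, i−1) ζ(i+s−1) a^{i−1}, the series on the right being convergent; here C(n,r) denotes the binomial coefficient. -/
/-- Hurwitz zeta value `ζ(s;a) = ∑_{n≥0} 1/(n+a)^s`. -/
noncomputable def hzeta (s : ℕ) (a : ℂ) : ℂ :=
  ∑' n : ℕ, (((n : ℂ) + a) ^ s)⁻¹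

/-- `ζ(s) = ∑_{n≥1} 1/n^s`. -/
noncomputable def zetaval (s : ℕ) : ℂ :=
  ∑' n : ℕ, (((n : ℂ) + 1) ^ s)⁻¹

lemma aux_summable (t : ℕ) (ht : 2 ≤ t) :
    Summable (fun n : ℕ => (((n : ℂ) + 1) ^ t)⁻¹) := by
  apply Summable.of_norm
  have h : Summable (fun n : ℕ => (((n : ℝ)) ^ t)⁻¹) :=
    Real.summable_nat_pow_inv.2 (by omega)
  have h2 := (summable_nat_add_iff 1).2 h
  refine h2.congr fun n => ?_
  push_cast
  have h3 : ‖(n : ℂ) + 1‖ = (n : ℝ) + 1 := by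
    rw [show ((n : ℂ) + 1) = ((n + 1 : ℕ) : ℂ) by push_cast; ring, Complex.norm_natCast]
    push_cast; ring
  simp [norm_inv, norm_pow, h3]

lemma aux_real (t : ℕ) (ht : 2 ≤ t) :
    Summable (fun n : ℕ => (((n : ℝ) + 1) ^ t)⁻¹) := by
  have h : Summable (fun n : ℕ => (((n : ℝ)) ^ t)⁻¹) :=
    Real.summable_nat_pow_inv.2 (by omega)
  have h2 := (summable_nat_add_iff 1).2 h
  refine h2.congr fun n => ?_
  push_cast
  ring_nf

lemma norm_cast_add_one (n : ℕ) : ‖(n : ℂ) + 1‖ = (n : ℝ) + 1 := by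
  rw [show ((n : ℂ) + 1) = ((n + 1 : ℕ) : ℂ) by push_cast; ring]
  rw [Complex.norm_natCast]
  push_cast; ring

set_option maxHeartbeats 1000000 in
/-- For `s ≥ 2` and `0 < |a| < 1`,
`ζ(s;a) = 1/a^s + ∑_{i≥1} (-1)^{i-1} C(i+s-2, i-1) ζ(i+s-1) a^{i-1}`,
the series on the right being convergent. -/
theorem hurwitz_zeta_expansion (s : ℕ) (hs : 2 ≤ s) (a : ℂ)
    (ha0 : a ≠ 0) (ha1 : ‖a‖ < 1) :
    HasSum
      (fun i : ℕ => (-1 : ℂ) ^ i * (Nat.choose (i + s - 1) i : ℂ) * zetaval (i + s) * a ^ i)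
      (hzeta s a - 1 / a ^ s) := by
  have ha1' : ‖a‖ < 1 := ha1
  have hch : ∀ i : ℕ, (i + s - 1).choose i = (i + (s - 1)).choose (s - 1) := by
    intro i
    have h := Nat.choose_symm (show i ≤ i + (s - 1) from Nat.le_add_right _ _)
    rw [show i + (s - 1) - i = s - 1 by omega] at h
    rw [show i + s - 1 = i + (s - 1) by omega]
    exact h.symm
  set F : ℕ × ℕ → ℂ := fun p =>
    (-1) ^ p.1 * ((p.1 + s - 1).choose p.1 : ℂ) * a ^ p.1 * (((p.2 : ℂ) + 1) ^ (p.1 + s))⁻¹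
    with hFdef
  -- norm summability
  have hg : Summable (fun i : ℕ => ((i + (s - 1)).choose (s - 1) : ℝ) * ‖a‖ ^ i) := by
    have := summable_choose_mul_geometric_of_norm_lt_one (R := ℝ) (s - 1)
      (r := ‖a‖) (by simpa using ha1')
    exact this
  have hh : Summable (fun n : ℕ => (((n : ℝ) + 1) ^ s)⁻¹) := aux_real s hs
  have hgh : Summable (fun p : ℕ × ℕ =>
      (((p.1 + (s - 1)).choose (s - 1) : ℝ) * ‖a‖ ^ p.1) * (((p.2 : ℝ) + 1) ^ s)⁻¹) :=
    hg.mul_of_nonneg hh (by intro i; positivity) (by intro n; positivity)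
  have hnorm : Summable (fun p : ℕ × ℕ => ‖F p‖) := by
    refine hgh.of_nonneg_of_le (fun p => norm_nonneg _) (fun p => ?_)
    obtain ⟨i, n⟩ := p
    have hxn : (1 : ℝ) ≤ (n : ℝ) + 1 := by linarith [Nat.cast_nonneg (α := ℝ) n]
    have : ‖F (i, n)‖ =
        ((i + s - 1).choose i : ℝ) * ‖a‖ ^ i * (((n : ℝ) + 1) ^ (i + s))⁻¹ := by
      simp only [hFdef, norm_mul, norm_pow, norm_inv, norm_neg, norm_one, one_pow, one_mul,
        Complex.norm_natCast, norm_cast_add_one]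
    rw [this, hch i]
    refine mul_le_mul_of_nonneg_left ?_ (by positivity)
    rw [inv_le_inv₀ (by positivity) (by positivity)]
    calc ((n : ℝ) + 1) ^ s = 1 * ((n : ℝ) + 1) ^ s := (one_mul _).symm
      _ ≤ ((n : ℝ) + 1) ^ i * ((n : ℝ) + 1) ^ s := by
          exact mul_le_mul_of_nonneg_right (one_le_pow₀ hxn) (by positivity)
      _ = ((n : ℝ) + 1) ^ (i + s) := (pow_add _ _ _).symm
  have hFsum : Summable F := hnorm.of_norm
  obtain ⟨T, hT⟩ := hFsum
  -- fiberwise in the second coordinate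
  have hfib1 : ∀ i : ℕ, HasSum (fun n => F (i, n))
      ((-1) ^ i * ((i + s - 1).choose i : ℂ) * a ^ i * zetaval (i + s)) := by
    intro i
    have hsum := aux_summable (i + s) (by omega)
    have := hsum.hasSum.mul_left ((-1 : ℂ) ^ i * ((i + s - 1).choose i : ℂ) * a ^ i)
    simpa [hFdef, zetaval, mul_assoc] using this
  have h1 : HasSum
      (fun i => (-1 : ℂ) ^ i * ((i + s - 1).choose i : ℂ) * a ^ i * zetaval (i + s)) T :=
    hT.prod_fiberwise hfib1
  -- fiberwise in the first coordinate
  have hswap : HasSum (fun p : ℕ × ℕ => F p.swap) T :=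
    ((Equiv.prodComm ℕ ℕ).hasSum_iff).2 hT
  have hfib2 : ∀ n : ℕ, HasSum (fun i => F (i, n)) ((((n : ℂ) + 1 + a) ^ s)⁻¹) := by
    intro n
    set x : ℂ := (n : ℂ) + 1 with hxdef
    have hxnorm : (1 : ℝ) ≤ ‖x‖ := by rw [hxdef, norm_cast_add_one]; linarith [Nat.cast_nonneg (α := ℝ) n]
    have hx : x ≠ 0 := by
      intro h; rw [h] at hxnorm; simp at hxnorm; linarith
    have hxa : x + a ≠ 0 := by
      intro h
      have : x = -a := by linear_combination h
      rw [this] at hxnorm; simp at hxnorm; linarith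
    set r : ℂ := -a * x⁻¹ with hrdef
    have hr : ‖r‖ < 1 := by
      rw [hrdef, norm_mul, norm_neg, norm_inv]
      calc ‖a‖ * ‖x‖⁻¹ ≤ ‖a‖ * 1 := by
            refine mul_le_mul_of_nonneg_left ?_ (norm_nonneg _)
            exact inv_le_one_of_one_le₀ hxnorm
        _ < 1 := by rw [mul_one]; exact ha1'
    have hb := hasSum_choose_mul_geometric_of_norm_lt_one (𝕜 := ℂ) (s - 1) hr
    have hb2 := hb.mul_right ((x ^ s)⁻¹)
    have hone : 1 - r = (x + a) * x⁻¹ := by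
      rw [hrdef]; field_simp; ring
    have hsumval : 1 / (1 - r) ^ (s - 1 + 1) * (x ^ s)⁻¹ = ((x + a) ^ s)⁻¹ := by
      rw [show s - 1 + 1 = s by omega, hone, mul_pow]
      field_simp
      simp [← mul_pow, hx]
    rw [hsumval] at hb2
    refine hb2.congr_fun fun i => ?_
    rw [hFdef]
    simp only
    rw [hch i, hrdef]
    rw [show x ^ (i + s) = x ^ i * x ^ s from pow_add x i s, mul_inv]
    rw [mul_pow, neg_pow, inv_pow]
    ring
  have h2 : HasSum (fun n : ℕ => (((n : ℂ) + 1 + a) ^ s)⁻¹) T := by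
    have := hswap.prod_fiberwise hfib2
    exact this
  -- shift index
  have h3 : HasSum (fun n : ℕ => (((n : ℂ) + a) ^ s)⁻¹) (T + (a ^ s)⁻¹) := by
    have h2' : HasSum (fun n : ℕ => ((((n + 1 : ℕ) : ℂ) + a) ^ s)⁻¹) T := by
      refine h2.congr_fun fun n => ?_
      push_cast; ring_nf
    have := (hasSum_nat_add_iff (f := fun n : ℕ => (((n : ℂ) + a) ^ s)⁻¹) 1).1 h2'
    simpa using this
  have hz : hzeta s a = T + (a ^ s)⁻¹ := h3.tsum_eq
  have hTeq : hzeta s a - 1 / a ^ s = T := by rw [hz]; ring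
  rw [hTeq]
  refine h1.congr_fun fun i => ?_
  ring
end

section
/- Let p ≥ 2 and n ≥ 1 be integers and let z be a complex number with |z − (n − 1/2)| < 1/2. Then ∑_{k=0}^∞ 1/(k−z)^p = ∑_{i=p}^∞ C(i−1, p−1)·((−1)^i h_n^{(i)} + t̃(i))·(z − n + 1/2)^{i−p}, the series on the right being convergent; here C(n,r) denotes the binomial coefficient. -/
/-- The `n`-th odd harmonic number of order `p`: `h_n^{(p)} = ∑_{k=1}^n 1/(k-1/2)^p`. -/
noncomputable def oddH (n p : ℕ) : ℂ :=
  ∑ k ∈ Finset.range n, (((k : ℂ) + 1/2) ^ p)⁻¹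

/-- `t̃(s) = ∑_{n≥1} 1/(n-1/2)^s`. -/
noncomputable def ttilde (s : ℕ) : ℂ :=
  ∑' n : ℕ, (((n : ℂ) + 1/2) ^ s)⁻¹

set_option maxHeartbeats 1000000 in
lemma summable_half_real (s : ℕ) (hs : 2 ≤ s) :
    Summable (fun m : ℕ => (((m : ℝ) + 1/2) ^ s)⁻¹) := by
  have hb : Summable (fun m : ℕ => (2:ℝ) ^ s * (1 / ((m:ℝ) + 1) ^ 2)) := by
    have h0 : Summable (fun n : ℕ => 1 / (n:ℝ) ^ 2) :=
      Real.summable_one_div_nat_pow.mpr (by norm_num)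
    have h1 : Summable (fun m : ℕ => 1 / ((m + 1 : ℕ):ℝ) ^ 2) :=
      (summable_nat_add_iff 1).mpr h0
    have h2 : Summable (fun m : ℕ => 1 / ((m:ℝ) + 1) ^ 2) := by
      simp only [Nat.cast_add, Nat.cast_one] at h1
      exact h1
    exact h2.mul_left _
  apply Summable.of_nonneg_of_le (fun m => by positivity) _ hb
  intro m
  have ha : (0:ℝ) < ((m:ℝ) + 1/2) ^ s := by positivity
  have hb' : (0:ℝ) < ((m:ℝ) + 1) ^ 2 := by positivity
  have key : ((m:ℝ) + 1) ^ 2 ≤ 2 ^ s * ((m:ℝ) + 1/2) ^ s := by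
    have h1 : (2:ℝ) ^ s * ((m:ℝ) + 1/2) ^ s = (2 * (m:ℝ) + 1) ^ s := by
      rw [← mul_pow]; ring_nf
    rw [h1]
    calc ((m:ℝ) + 1) ^ 2 ≤ (2 * (m:ℝ) + 1) ^ 2 := by
          apply pow_le_pow_left₀ (by positivity) (by linarith [Nat.cast_nonneg (α := ℝ) m])
      _ ≤ (2 * (m:ℝ) + 1) ^ s := by
          apply pow_le_pow_right₀ (by linarith [Nat.cast_nonneg (α := ℝ) m]) hs
  rw [inv_eq_one_div, mul_one_div, div_le_div_iff₀ ha hb']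
  linarith [key]

lemma summable_half (s : ℕ) (hs : 2 ≤ s) :
    Summable (fun m : ℕ => (((m : ℂ) + 1/2) ^ s)⁻¹) := by
  rw [← summable_norm_iff]
  convert summable_half_real s hs using 2 with m
  have h : ((m : ℂ) + 1/2) = (((m : ℝ) + 1/2 : ℝ) : ℂ) := by push_cast; ring
  rw [h, ← Complex.ofReal_pow, ← Complex.ofReal_inv, Complex.norm_real,
    Real.norm_of_nonneg (by positivity)]

lemma hasSum_half (s : ℕ) (hs : 2 ≤ s) :
    HasSum (fun m : ℕ => (((m : ℂ) + 1/2) ^ s)⁻¹) (ttilde s) :=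
  (summable_half s hs).hasSum

/-- For each `i`, the sum over `k`. -/
lemma hasSum_over_k (n s : ℕ) (hn : 1 ≤ n) (hs : 2 ≤ s) :
    HasSum (fun k : ℕ => ((((k : ℂ) - n + 1/2)) ^ s)⁻¹)
      ((-1 : ℂ) ^ s * oddH n s + ttilde s) := by
  set f : ℕ → ℂ := fun k => ((((k : ℂ) - n + 1/2)) ^ s)⁻¹ with hf
  have h1 : HasSum (fun m : ℕ => f (m + n)) (ttilde s) := by
    have : ∀ m : ℕ, f (m + n) = (((m : ℂ) + 1/2) ^ s)⁻¹ := by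
      intro m; simp only [hf]; push_cast; ring_nf
    simpa [this] using hasSum_half s hs
  have h2 : ∑ k ∈ Finset.range n, f k = (-1 : ℂ) ^ s * oddH n s := by
    rw [← Finset.sum_range_reflect]
    rw [oddH, Finset.mul_sum]
    apply Finset.sum_congr rfl
    intro k hk
    simp only [Finset.mem_range] at hk
    have hcast : ((n - 1 - k : ℕ) : ℂ) = (n : ℂ) - 1 - k := by
      have h' : n - 1 - k + k + 1 = n := by omega
      have h1 : ((n - 1 - k : ℕ) : ℂ) + k + 1 = n := by
        exact_mod_cast congrArg (Nat.cast : ℕ → ℂ) h'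
      linear_combination h1
    rw [hf]
    simp only [hcast]
    have : ((n : ℂ) - 1 - k) - n + 1/2 = -((k : ℂ) + 1/2) := by ring
    rw [this, neg_pow, mul_inv, ← inv_pow, inv_neg, inv_one]
  have := (hasSum_nat_add_iff (f := f) n).mp h1
  rw [h2] at this
  rw [add_comm] at this
  exact this

set_option maxHeartbeats 1000000 in
/-- For `p ≥ 2`, `n ≥ 1` and `|z - (n - 1/2)| < 1/2`,
`∑_{k≥0} 1/(k-z)^p = ∑_{i≥p} C(i-1, p-1) ((-1)^i h_n^{(i)} + t̃(i)) (z-n+1/2)^{i-p}`,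
the series on the right being convergent. -/
theorem psi_expansion_at_half_integers (p n : ℕ) (hp : 2 ≤ p) (hn : 1 ≤ n) (z : ℂ)
    (hz : ‖z - ((n : ℂ) - 1/2)‖ < 1/2) :
    HasSum
      (fun i : ℕ => (Nat.choose (i + p - 1) (p - 1) : ℂ) *
        ((-1 : ℂ) ^ (i + p) * oddH n (i + p) + ttilde (i + p)) *
        (z - (n : ℂ) + 1/2) ^ i)
      (∑' k : ℕ, (((k : ℂ) - z) ^ p)⁻¹) := by
  set w : ℂ := z - (n : ℂ) + 1/2 with hw
  have hwz : z - ((n : ℂ) - 1/2) = w := by rw [hw]; ring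
  have hwn : ‖w‖ < 1/2 := by rw [← hwz]; exact hz
  set a : ℕ → ℂ := fun k => (k : ℂ) - n + 1/2 with ha
  have hanorm : ∀ k, (1:ℝ)/2 ≤ ‖a k‖ := by
    intro k
    have hcast : a k = ((((k:ℝ) - n + 1/2) : ℝ) : ℂ) := by
      simp only [ha]; push_cast; ring
    rw [hcast, Complex.norm_real]
    rcases le_or_gt n k with h | h
    · have h' : (n:ℝ) ≤ k := by exact_mod_cast h
      rw [Real.norm_of_nonneg (by linarith)]
      linarith
    · have hk1 : (k:ℝ) ≤ (n:ℝ) - 1 := by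
        have h' : (k:ℝ) + 1 ≤ n := by exact_mod_cast h
        linarith
      rw [Real.norm_eq_abs, abs_of_nonpos (by linarith)]
      linarith
  have ha0 : ∀ k, a k ≠ 0 := by
    intro k hk0
    have := hanorm k
    rw [hk0, norm_zero] at this
    linarith
  set r : ℝ := 2 * ‖w‖ with hr
  have hr1 : r < 1 := by rw [hr]; linarith
  have hr0 : 0 ≤ r := by positivity
  set F : ℕ × ℕ → ℂ := fun q =>
    (Nat.choose (q.2 + p - 1) (p - 1) : ℂ) * ((a q.1) ^ (q.2 + p))⁻¹ * w ^ q.2 with hF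
  have g1 : Summable (fun k : ℕ => (‖a k‖ ^ p)⁻¹) := by
    have h1 := summable_norm_iff.mpr (hasSum_over_k n p hn hp).summable
    convert h1 using 2 with k
    rw [norm_inv, norm_pow]
  have g2 : Summable (fun i : ℕ => ((i + (p-1)).choose (p-1) : ℝ) * r ^ i) := by
    apply summable_choose_mul_geometric_of_norm_lt_one
    rwa [Real.norm_of_nonneg hr0]
  have hFsummable : Summable F := by
    apply Summable.of_norm_bounded
      (g := fun q : ℕ × ℕ => (‖a q.1‖ ^ p)⁻¹ * (((q.2 + (p-1)).choose (p-1) : ℝ) * r ^ q.2))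
      (g1.mul_of_nonneg g2 (fun k => by positivity) (fun i => by positivity))
    rintro ⟨k, i⟩
    have hidx : i + p - 1 = i + (p - 1) := by omega
    have hnormF : ‖F (k, i)‖ =
        ((i + (p-1)).choose (p-1) : ℝ) * (‖a k‖ ^ (i + p))⁻¹ * ‖w‖ ^ i := by
      simp only [hF, hidx, norm_mul, norm_inv, norm_pow, RCLike.norm_natCast]
    rw [hnormF]
    have hak : (0:ℝ) < ‖a k‖ := lt_of_lt_of_le (by norm_num) (hanorm k)
    have h1 : (‖a k‖ ^ (i + p))⁻¹ * ‖w‖ ^ i ≤ (‖a k‖ ^ p)⁻¹ * r ^ i := by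
      have hq : ‖w‖ / ‖a k‖ ≤ r := by
        rw [div_le_iff₀ hak, hr]
        nlinarith [hanorm k, norm_nonneg w]
      have h2 : (‖w‖ / ‖a k‖) ^ i ≤ r ^ i :=
        pow_le_pow_left₀ (by positivity) hq i
      have h3 : (‖a k‖ ^ (i + p))⁻¹ * ‖w‖ ^ i = (‖a k‖ ^ p)⁻¹ * (‖w‖ / ‖a k‖) ^ i := by
        rw [pow_add, div_pow]
        field_simp
      rw [h3]
      exact mul_le_mul_of_nonneg_left h2 (by positivity)
    calc ((i + (p-1)).choose (p-1) : ℝ) * (‖a k‖ ^ (i + p))⁻¹ * ‖w‖ ^ i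
        ≤ ((i + (p-1)).choose (p-1) : ℝ) * ((‖a k‖ ^ p)⁻¹ * r ^ i) := by
          rw [mul_assoc]
          exact mul_le_mul_of_nonneg_left h1 (by positivity)
      _ = (‖a k‖ ^ p)⁻¹ * (((i + (p-1)).choose (p-1) : ℝ) * r ^ i) := by ring
  have step1 : ∀ k : ℕ, HasSum (fun i => F (k, i)) ((((k : ℂ) - z) ^ p)⁻¹) := by
    intro k
    have hak : (0:ℝ) < ‖a k‖ := lt_of_lt_of_le (by norm_num) (hanorm k)
    have hquot : ‖w / a k‖ < 1 := by
      rw [norm_div, div_lt_one hak]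
      linarith [hanorm k]
    have base := (hasSum_choose_mul_geometric_of_norm_lt_one (p - 1) hquot).mul_left
      (((a k) ^ p)⁻¹)
    have hpp : p - 1 + 1 = p := by omega
    rw [hpp] at base
    have hval : ((a k) ^ p)⁻¹ * (1 / (1 - w / a k) ^ p) = (((k : ℂ) - z) ^ p)⁻¹ := by
      have hkz : (1 - w / a k) * a k = (k : ℂ) - z := by
        have hak' := ha0 k
        field_simp
        simp only [ha, hw]
        ring
      rw [← hkz, mul_pow, one_div, mul_inv, mul_comm]
    rw [hval] at base
    have hfun : (fun i : ℕ => ((a k) ^ p)⁻¹ *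
        ((((i + (p - 1)).choose (p - 1) : ℕ) : ℂ) * (w / a k) ^ i)) = fun i => F (k, i) := by
      funext i
      simp only [hF]
      rw [show i + p - 1 = i + (p - 1) from by omega, div_pow, pow_add, mul_inv,
        div_eq_mul_inv]
      ring
    exact hfun ▸ base
  have step2 : ∀ i : ℕ, HasSum (fun k => F (k, i))
      ((Nat.choose (i + p - 1) (p - 1) : ℂ) *
        ((-1 : ℂ) ^ (i + p) * oddH n (i + p) + ttilde (i + p)) * w ^ i) := by
    intro i
    exact ((hasSum_over_k n (i + p) hn (by omega)).mul_left
      ((Nat.choose (i + p - 1) (p - 1) : ℂ))).mul_right (w ^ i)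
  have H1 : HasSum (fun k : ℕ => (((k : ℂ) - z) ^ p)⁻¹) (∑' q, F q) :=
    hFsummable.hasSum.prod_fiberwise step1
  have H2 : HasSum (fun q : ℕ × ℕ => F (q.2, q.1)) (∑' q, F q) := by
    exact ((Equiv.prodComm ℕ ℕ).hasSum_iff (f := F) (a := ∑' q, F q)).mpr
      hFsummable.hasSum
  have H3 := H2.prod_fiberwise step2
  rw [H1.tsum_eq]
  exact H3
end
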